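/- For $1\le\ell\le k$ (indices $0\le i_1<\cdots<i_k\le d+1$), consider the shelling of $\Diamond(\Gamma_{i_1},\ldots,\Gamma_{i_k})$ obtained by listing, for $\ell=1,\ldots,k$ in order, the facets of $\Diamond(\Gamma_{i_\ell})$ in degree lexicographic order with respect to an initial facet $F^{(\ell)}_0$. Then the restriction face of the facet $F^{(\ell)}_i$ is $R^{(\ell)}_i=\{i_1,\ldots,i_{\ell-1}\}\cup\{F^{(\ell)}_i(j): F^{(\ell)}_i \text{ differs from } F^{(\ell)}_0 \text{ in position } j\}$; in particular this ordering is a shelling order for $\Diamond(\Gamma_{i_1},\ldots,\Gamma_{i_k})$. -/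

import Mathlib

namespace Paper

/-- Ambient vertex type in dimension `d`: original vertices `0,…,d+1` (left)
and new vertices `v_0,…,v_d` (right). -/
abbrev V (d : ℕ) := Sum (Fin (d+2)) (Fin (d+1))

def origV (d m : ℕ) : V d := Sum.inl ⟨m % (d+2), Nat.mod_lt m (by omega)⟩
def newV (d m : ℕ) : V d := Sum.inr ⟨m % (d+1), Nat.mod_lt m (by omega)⟩

variable {W : Type*} [DecidableEq W] {W' : Type*} [DecidableEq W']

def IsComplex (Δ : Set (Finset W)) : Prop := ∀ F ∈ Δ, ∀ G, G ⊆ F → G ∈ Δ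

def isFacet (Δ : Set (Finset W)) (F : Finset W) : Prop :=
  F ∈ Δ ∧ ∀ G ∈ Δ, F ⊆ G → G = F

def simplexOn (A : Finset W) : Set (Finset W) := {F | F ⊆ A}

def bdrySimplex (A : Finset W) : Set (Finset W) := {F | F ⊂ A}

def joinC (Δ Γ : Set (Finset W)) : Set (Finset W) := {s | ∃ a ∈ Δ, ∃ b ∈ Γ, s = a ∪ b}

def lkC (Δ : Set (Finset W)) (F : Finset W) : Set (Finset W) :=
  {G | Disjoint F G ∧ F ∪ G ∈ Δ}

def delFace (Δ : Set (Finset W)) (F : Finset W) : Set (Finset W) := {G ∈ Δ | ¬ F ⊆ G}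

/-- Stellar subdivision at `F` with new vertex `v`. -/
def sdC (v : W) (F : Finset W) (Δ : Set (Finset W)) : Set (Finset W) :=
  delFace Δ F ∪ joinC (simplexOn {v}) (joinC (bdrySimplex F) (lkC Δ F))

/-- Deletion of a subcomplex: the complex generated by the facets of `Δ`
that are not facets of `Γ`. -/
def delSub (Δ Γ : Set (Finset W)) : Set (Finset W) :=
  {G | ∃ F, isFacet Δ F ∧ ¬ isFacet Γ F ∧ G ⊆ F}

def IsInduced (Γ Δ : Set (Finset W)) : Prop :=
  Γ ⊆ Δ ∧ ∀ F ∈ Δ, (∀ v ∈ F, ({v} : Finset W) ∈ Γ) → F ∈ Γ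

/-- Simplicial isomorphism (via a permutation of the ambient vertex set). -/
def IsoC (Δ Γ : Set (Finset W)) : Prop :=
  ∃ e : Equiv.Perm W, ∀ F : Finset W, F ∈ Δ ↔ F.image (⇑e) ∈ Γ

def mapC (f : W → W') (Δ : Set (Finset W)) : Set (Finset W') := {F | ∃ G ∈ Δ, F = G.image f}

/-- Number of faces of cardinality `i` (i.e. dimension `i-1`). -/
noncomputable def fnum (Δ : Set (Finset W)) (i : ℕ) : ℕ := {F | F ∈ Δ ∧ F.card = i}.ncard

/-- `h`-numbers of a `d`-dimensional complex. -/
noncomputable def hnum (d : ℕ) (Δ : Set (Finset W)) (j : ℕ) : ℤ :=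
  ∑ i ∈ Finset.range (j+1),
    (-1 : ℤ)^(j-i) * ((d+1-i).choose (d+1-j) : ℤ) * (fnum Δ i : ℤ)

/-- `R` is the restriction face of the `i`-th facet of the ordering `L`. -/
def IsRestriction (L : List (Finset W)) (i : ℕ) (R : Finset W) : Prop :=
  R ⊆ L.getD i ∅ ∧ (∀ j < i, ¬ R ⊆ L.getD j ∅) ∧
    ∀ G ⊆ L.getD i ∅, (∀ j < i, ¬ G ⊆ L.getD j ∅) → R ⊆ G

def IsShelling (Δ : Set (Finset W)) (L : List (Finset W)) : Prop :=
  L.Nodup ∧ (∀ F, F ∈ L ↔ isFacet Δ F) ∧ ∀ i < L.length, ∃ R, IsRestriction L i R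

def Shellable (Δ : Set (Finset W)) : Prop := ∃ L, IsShelling Δ L

def IsRelRestriction (Sg : Set (Finset W)) (L : List (Finset W)) (i : ℕ) (R : Finset W) : Prop :=
  R ⊆ L.getD i ∅ ∧ R ∉ Sg ∧ (∀ j < i, ¬ R ⊆ L.getD j ∅) ∧
    ∀ G ⊆ L.getD i ∅, G ∉ Sg → (∀ j < i, ¬ G ⊆ L.getD j ∅) → R ⊆ G

/-- Shelling of the relative complex `(Δ, Sg)`. -/
def IsRelShelling (Δ Sg : Set (Finset W)) (L : List (Finset W)) : Prop :=
  L.Nodup ∧ (∀ F, F ∈ L ↔ (isFacet Δ F ∧ F ∉ Sg)) ∧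
    ∀ i < L.length, ∃ R, IsRelRestriction Sg L i R

/-- The facet of the `(d+1)`-simplex on `{0,…,d+1}` omitting vertex `i`. -/
def Gface (d i : ℕ) : Finset (V d) :=
  ((Finset.range (d+2)).filter (fun j => j ≠ i)).image (origV d)

def GammaC (d i : ℕ) : Set (Finset (V d)) := simplexOn (Gface d i)

def GammaU (d : ℕ) (I : Finset ℕ) : Set (Finset (V d)) := {F | ∃ i ∈ I, F ⊆ Gface d i}

/-- The face `F_i = {i+1,…,d+1}` subdivided by the diamond operation. -/
def Fsub (d i : ℕ) : Finset (V d) := (Finset.Ioc i (d+1)).image (origV d)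

/-- The diamond operation: successive stellar subdivisions at `F_0, F_1, …, F_d`
with new vertices `v_0,…,v_d` (subdivision at a non-face has no effect). -/
def Diam (d : ℕ) (Δ : Set (Finset (V d))) : Set (Finset (V d)) :=
  (List.range (d+1)).foldl (fun Γ i => sdC (newV d i) (Fsub d i) Γ) Δ

def DiamU (d : ℕ) (I : Finset ℕ) : Set (Finset (V d)) := Diam d (GammaU d I)

/-- Boundary complex of the cross-polytope on the vertex pairs `{j, v_j}`, `j ∈ S`. -/
def crossN (d : ℕ) (S : Finset ℕ) : Set (Finset (V d)) :=
  {F | (∀ x ∈ F, ∃ j ∈ S, x = origV d j ∨ x = newV d j) ∧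
       ∀ j ∈ S, ¬ (origV d j ∈ F ∧ newV d j ∈ F)}

/-- Boundary complex: generated by the faces of cardinality `n` contained in
exactly one facet. -/
def bdryC (n : ℕ) (Δ : Set (Finset W)) : Set (Finset W) :=
  {G | ∃ F, G ⊆ F ∧ F ∈ Δ ∧ F.card = n ∧ ∃! H, isFacet Δ H ∧ F ⊆ H}

/-- Positions in `P` at which `G` differs from the reference facet `F0`. -/
def diffSet (d : ℕ) (P : Finset ℕ) (F0 G : Finset (V d)) : Finset ℕ :=
  P.filter (fun j => decide (origV d j ∈ G) ≠ decide (origV d j ∈ F0))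

/-- Degree lexicographic comparison of characteristic (difference) sets. -/
def dlexLT (D D' : Finset ℕ) : Prop :=
  D.card < D'.card ∨
    (D.card = D'.card ∧ ∃ m, m ∉ D ∧ m ∈ D' ∧ ∀ j < m, (j ∈ D ↔ j ∈ D'))

/-- `L` lists the facets of `Δ` in degree lexicographic order w.r.t. `F0`. -/
def IsDegLexOrder (d : ℕ) (P : Finset ℕ) (Δ : Set (Finset (V d)))
    (F0 : Finset (V d)) (L : List (Finset (V d))) : Prop :=
  L.Nodup ∧ (∀ F, F ∈ L ↔ isFacet Δ F) ∧
    L.Pairwise (fun G G' => dlexLT (diffSet d P F0 G) (diffSet d P F0 G'))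

/-- Vertices of `F` sitting at the positions in `D`. -/
def posVerts (d : ℕ) (F : Finset (V d)) (D : Finset ℕ) : Finset (V d) :=
  F.filter (fun x => ∃ j ∈ D, x = origV d j ∨ x = newV d j)

def IsoN (Δ Γ : Set (Finset ℕ)) : Prop :=
  ∃ e : Equiv.Perm ℕ, ∀ F : Finset ℕ, F ∈ Δ ↔ F.image (⇑e) ∈ Γ

def StellarMove (Δ Γ : Set (Finset ℕ)) : Prop :=
  ∃ (F : Finset ℕ) (v : ℕ), F ∈ Δ ∧ F ≠ ∅ ∧ (∀ G ∈ Δ, v ∉ G) ∧ Γ = sdC v F Δ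

/-- PL homeomorphism of simplicial complexes, encoded via Alexander's theorem as
stellar equivalence: the equivalence relation generated by stellar subdivisions
(and their inverses, the welds) together with simplicial isomorphisms. -/
def PLHomeo (Δ Γ : Set (Finset ℕ)) : Prop :=
  Relation.EqvGen (fun A B => StellarMove A B ∨ IsoN A B) Δ Γ

def encV (d : ℕ) : V d → ℕ := Sum.elim (fun j => 2 * j.val) (fun j => 2 * j.val + 1)

def toN (d : ℕ) (Δ : Set (Finset (V d))) : Set (Finset ℕ) := mapC (encV d) Δ

def ballN (c : ℕ) : Set (Finset ℕ) := {F | F ⊆ Finset.range c}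

def sphereN (c : ℕ) : Set (Finset ℕ) := {F | F ⊂ Finset.range (c+1)}

/-- `Δ` is a combinatorial ball of dimension `c-1` (a `(c-1)`-simplex has `c` vertices). -/
def IsCombBall (d c : ℕ) (Δ : Set (Finset (V d))) : Prop := PLHomeo (toN d Δ) (ballN c)

/-- `Δ` is a combinatorial sphere of dimension `c-1`. -/
def IsCombSphere (d c : ℕ) (Δ : Set (Finset (V d))) : Prop := PLHomeo (toN d Δ) (sphereN c)

def ConnC (Δ : Set (Finset W)) : Prop :=
  ∀ u v : W, ({u} : Finset W) ∈ Δ → ({v} : Finset W) ∈ Δ →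
    Relation.ReflTransGen (fun a b => ({a, b} : Finset W) ∈ Δ) u v

/-- Combinatorial `d`-manifold (possibly with boundary): connected, pure, and all
links of nonempty faces are combinatorial balls or spheres of dimension `d - |F|`. -/
def IsCombManifold (d : ℕ) (Δ : Set (Finset (V d))) : Prop :=
  IsComplex Δ ∧ (∅ : Finset (V d)) ∈ Δ ∧ ConnC Δ ∧
  (∀ F ∈ Δ, ∃ G, isFacet Δ G ∧ F ⊆ G ∧ G.card = d+1) ∧
  ∀ F ∈ Δ, F ≠ (∅ : Finset (V d)) →
    (IsCombBall d (d+1-F.card) (lkC Δ F) ∨ IsCombSphere d (d+1-F.card) (lkC Δ F))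

def liftV (d : ℕ) : V d → V (d+1) := Sum.map Fin.castSucc Fin.castSucc

/-- The relabeling `π : i ↦ i+1`, `v_i ↦ v_{i+1}`. -/
def piV (d : ℕ) : V d → V (d+1) := Sum.map Fin.succ Fin.succ

/-- The relabeling `ρ : i ↦ i-1`, `v_i ↦ v_{i-1}` (indices mod `d+1`). -/
def rhoV (d : ℕ) : V d → V d := fun x =>
  match x with
  | Sum.inl j => origV d ((j.val + d) % (d+1))
  | Sum.inr j => newV d ((j.val + d) % (d+1))

/-- `ψ` swaps the vertices `d` and `v_d`. -/
def psiV (d : ℕ) : V d → V d := fun x => Equiv.swap (origV d d) (newV d d) x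

def sigmaV (d : ℕ) : V d → V d := psiV d ∘ rhoV d

/-- `Δ` is (isomorphic to) the boundary complex of the `(d+1)`-dimensional
cross-polytope. -/
def IsCrossBdry (d : ℕ) (Δ : Set (Finset W)) : Prop :=
  ∃ f : Fin (d+1) × Bool → W, Function.Injective f ∧
    Δ = {F | (∀ v ∈ F, ∃ p, v = f p) ∧
             ∀ j : Fin (d+1), ¬ (f (j, true) ∈ F ∧ f (j, false) ∈ F)}

/-- `Sg` is a connected sum of `Δ` and `Γ`: they meet exactly in the full simplex
on a common facet `F`, which is removed. -/
def IsConnSum (Δ Γ Sg : Set (Finset W)) : Prop :=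
  ∃ F : Finset W, isFacet Δ F ∧ isFacet Γ F ∧ Δ ∩ Γ = simplexOn F ∧ Sg = (Δ ∪ Γ) \ {F}

/-- Connected sum of `m+1` copies of the boundary of the `(d+1)`-cross-polytope. -/
def IsCrossStacked (d : ℕ) : ℕ → Set (Finset W) → Prop
  | 0, Δ => IsCrossBdry d Δ
  | (m+1), Δ => ∃ A B : Set (Finset W), IsCrossStacked d m A ∧ IsCrossBdry d B ∧ IsConnSum A B Δ

/-- The initial facet of the block `Diam(Γ_{iℓ})` (for block index `ℓ ≥ 1`;
block `0` uses the facet `G0` meeting the boundary). -/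
def initFacet (d i1 iℓ : ℕ) (G0 : Finset (V d)) (ℓ : ℕ) : Finset (V d) :=
  if ℓ = 0 then G0
  else ((Finset.range iℓ).image (origV d)) ∪ {newV d iℓ} ∪
       ((Finset.Ioo iℓ (max i1 iℓ)).image (origV d)) ∪
       ((Finset.Icc (max i1 iℓ) d).image (newV d))



instance sumElimDecidable {α β : Type*} {p : α → Prop} {q : β → Prop}
    [DecidablePred p] [DecidablePred q] : DecidablePred (Sum.elim p q) := fun x =>
  match x with
  | Sum.inl a => inferInstanceAs (Decidable (p a))
  | Sum.inr b => inferInstanceAs (Decidable (q b))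

/-- Facets of `Diam(Γ_i)`, parametrized by `S ⊆ (i,d]`. -/
def Gfc (d i : ℕ) (S : Finset ℕ) : Finset (V d) :=
  Finset.univ.filter (Sum.elim
    (fun a : Fin (d+2) => a.val < i ∨ (i < a.val ∧ a.val ≤ d ∧ a.val ∉ S))
    (fun a : Fin (d+1) => a.val = i ∨ (i < a.val ∧ a.val ∈ S)))

@[simp] lemma mem_Gfc_inl {d i : ℕ} {S : Finset ℕ} {a : Fin (d+2)} :
    Sum.inl a ∈ Gfc d i S ↔ (a.val < i ∨ (i < a.val ∧ a.val ≤ d ∧ a.val ∉ S)) := by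
  simp [Gfc]

@[simp] lemma mem_Gfc_inr {d i : ℕ} {S : Finset ℕ} {a : Fin (d+1)} :
    Sum.inr a ∈ Gfc d i S ↔ (a.val = i ∨ (i < a.val ∧ a.val ∈ S)) := by
  simp [Gfc]

lemma origV_eq {d m : ℕ} (h : m ≤ d+1) : origV d m = Sum.inl ⟨m, by omega⟩ := by
  simp [origV, Nat.mod_eq_of_lt (by omega : m < d+2)]

lemma newV_eq {d m : ℕ} (h : m ≤ d) : newV d m = Sum.inr ⟨m, by omega⟩ := by
  simp [newV, Nat.mod_eq_of_lt (by omega : m < d+1)]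

lemma mem_Gfc_origV {d i m : ℕ} {S : Finset ℕ} (h : m ≤ d+1) :
    origV d m ∈ Gfc d i S ↔ (m < i ∨ (i < m ∧ m ≤ d ∧ m ∉ S)) := by
  rw [origV_eq h]; simp

lemma mem_Gfc_newV {d i m : ℕ} {S : Finset ℕ} (h : m ≤ d) :
    newV d m ∈ Gfc d i S ↔ (m = i ∨ (i < m ∧ m ∈ S)) := by
  rw [newV_eq h]; simp

/-- Intermediate facets during the subdivision process. -/
def Fc (d i m x : ℕ) (S : Finset ℕ) : Finset (V d) :=
  Finset.univ.filter (Sum.elim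
    (fun a : Fin (d+2) => a.val < i ∨ (i < a.val ∧ a.val ≤ m ∧ a.val ∉ S) ∨
       (m < a.val ∧ a.val ≠ x))
    (fun a : Fin (d+1) => a.val = i ∨ (i < a.val ∧ a.val ≤ m ∧ a.val ∈ S)))

@[simp] lemma mem_Fc_inl {d i m x : ℕ} {S : Finset ℕ} {a : Fin (d+2)} :
    Sum.inl a ∈ Fc d i m x S ↔ (a.val < i ∨ (i < a.val ∧ a.val ≤ m ∧ a.val ∉ S) ∨
       (m < a.val ∧ a.val ≠ x)) := by simp [Fc]

@[simp] lemma mem_Fc_inr {d i m x : ℕ} {S : Finset ℕ} {a : Fin (d+1)} :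
    Sum.inr a ∈ Fc d i m x S ↔ (a.val = i ∨ (i < a.val ∧ a.val ≤ m ∧ a.val ∈ S)) := by
  simp [Fc]

lemma Fc_last {d i : ℕ} {S : Finset ℕ} : Fc d i d (d+1) S = Gfc d i S := by
  ext x
  rcases x with a | a
  · simp only [mem_Fc_inl, mem_Gfc_inl]
    have := a.isLt
    constructor
    · rintro (h | h | h)
      · exact Or.inl h
      · exact Or.inr h
      · exact absurd h (by omega)
    · rintro (h | h)
      · exact Or.inl h
      · exact Or.inr (Or.inl h)
  · simp only [mem_Fc_inr, mem_Gfc_inr]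
    have := a.isLt
    constructor
    · rintro (h | h) <;> [left; right] <;> first | exact h | exact ⟨h.1, h.2.2⟩
    · rintro (h | h)
      · left; exact h
      · right; exact ⟨h.1, by omega, h.2⟩

@[simp] lemma mem_Fsub_iff {d j : ℕ} {x : V d} :
    x ∈ Fsub d j ↔ ∃ a : Fin (d+2), x = Sum.inl a ∧ j < a.val := by
  constructor
  · intro hx
    simp only [Fsub, Finset.mem_image, Finset.mem_Ioc] at hx
    obtain ⟨m, ⟨hm1, hm2⟩, rfl⟩ := hx
    exact ⟨⟨m, by omega⟩, by rw [origV_eq (by omega)], hm1⟩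
  · rintro ⟨a, rfl, ha⟩
    simp only [Fsub, Finset.mem_image, Finset.mem_Ioc]
    exact ⟨a.val, ⟨ha, by omega⟩, by rw [origV_eq (by omega)]⟩

lemma Gface_eq_filter {d i : ℕ} :
    Gface d i = Finset.univ.filter (Sum.elim
      (fun a : Fin (d+2) => a.val ≠ i) (fun _ : Fin (d+1) => False)) := by
  ext x
  rcases x with a | a
  · simp only [Gface, Finset.mem_image, Finset.mem_filter, Finset.mem_range, Finset.mem_univ,
      Sum.elim_inl, true_and]
    constructor
    · rintro ⟨m, ⟨hm, hmi⟩, he⟩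
      rw [origV_eq (by omega)] at he
      cases he; exact hmi
    · intro h
      exact ⟨a.val, ⟨a.isLt, h⟩, by rw [origV_eq (by omega : a.val ≤ d+1)]⟩
  · simp only [Gface, Finset.mem_image, Finset.mem_filter, Finset.mem_range, Finset.mem_univ,
      Sum.elim_inr]
    constructor
    · rintro ⟨m, ⟨hm, _⟩, he⟩
      rw [origV_eq (by omega)] at he
      exact absurd he (by simp)
    · rintro ⟨_, h⟩; exact h.elim

/-- Master lemma: stellar subdivision of a complex given as the down-closure of a
family of "facets". -/
lemma sd_downclosure {W : Type*} [DecidableEq W] {ι : Type*} (Φ : ι → Finset W) (C : Set ι)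
    (F : Finset W) (v : W) (hv : ∀ c ∈ C, v ∉ Φ c) :
    sdC v F {G | ∃ c ∈ C, G ⊆ Φ c} =
      {G | (∃ c ∈ C, ¬ F ⊆ Φ c ∧ G ⊆ Φ c) ∨
           (∃ c ∈ C, F ⊆ Φ c ∧ ∃ y ∈ F, G ⊆ insert v ((Φ c \ F) ∪ F.erase y))} := by
  ext G
  constructor
  · rintro (⟨⟨c, hc, hsub⟩, hnF⟩ | ⟨a, ha, s, ⟨b, hb, e, he, rfl⟩, rfl⟩)
    · by_cases hFc : F ⊆ Φ c
      · right
        obtain ⟨y, hyF, hyG⟩ : ∃ y ∈ F, y ∉ G := by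
          by_contra h
          push_neg at h
          exact hnF h
        refine ⟨c, hc, hFc, y, hyF, fun x hx => ?_⟩
        by_cases hxF : x ∈ F
        · exact Finset.mem_insert_of_mem (Finset.mem_union_right _
            (Finset.mem_erase.2 ⟨fun hxy => hyG (hxy ▸ hx), hxF⟩))
        · exact Finset.mem_insert_of_mem (Finset.mem_union_left _
            (Finset.mem_sdiff.2 ⟨hsub hx, hxF⟩))
      · exact Or.inl ⟨c, hc, hFc, hsub⟩
    · -- join part
      obtain ⟨hde, c, hc, hFe⟩ := he
      right
      have hFc : F ⊆ Φ c := (Finset.union_subset_iff.1 hFe).1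
      obtain ⟨y, hyF, hyb⟩ := Finset.exists_of_ssubset hb
      refine ⟨c, hc, hFc, y, hyF, fun x hx => ?_⟩
      rcases Finset.mem_union.1 hx with hx | hx
      · have : x = v := by simpa [simplexOn] using ha hx
        exact this ▸ Finset.mem_insert_self _ _
      rcases Finset.mem_union.1 hx with hx | hx
      · exact Finset.mem_insert_of_mem (Finset.mem_union_right _
          (Finset.mem_erase.2 ⟨fun h => hyb (h ▸ hx), hb.1 hx⟩))
      · refine Finset.mem_insert_of_mem (Finset.mem_union_left _ (Finset.mem_sdiff.2
          ⟨hFe (Finset.mem_union_right _ hx), ?_⟩))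
        exact fun hxF => (Finset.disjoint_left.1 hde) hxF hx
  · rintro (⟨c, hc, hnF, hsub⟩ | ⟨c, hc, hFc, y, hyF, hsub⟩)
    · exact Or.inl ⟨⟨c, hc, hsub⟩, fun h => hnF (h.trans hsub)⟩
    · right
      have hyG : y ∉ G := by
        intro hyG
        rcases Finset.mem_insert.1 (hsub hyG) with h | h
        · exact hv c hc (h ▸ hFc hyF)
        rcases Finset.mem_union.1 h with h | h
        · exact (Finset.mem_sdiff.1 h).2 hyF
        · exact (Finset.mem_erase.1 h).1 rfl
      refine ⟨G ∩ {v}, by intro x hx; exact Finset.mem_of_mem_inter_right hx,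
        (G ∩ F) ∪ ((G \ {v}) \ F), ⟨G ∩ F, ?_, (G \ {v}) \ F, ⟨?_, ⟨c, hc, ?_⟩⟩, rfl⟩, ?_⟩
      · -- G ∩ F ⊂ F
        refine Finset.ssubset_iff_of_subset (Finset.inter_subset_right) |>.2
          ⟨y, hyF, fun h => hyG (Finset.mem_of_mem_inter_left h)⟩
      · -- Disjoint F (G \ {v} \ F)
        exact Finset.disjoint_left.2 fun x hxF hx => (Finset.mem_sdiff.1 hx).2 hxF
      · -- F ∪ ((G \ {v}) \ F) ⊆ Φ c
        refine Finset.union_subset hFc fun x hx => ?_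
        obtain ⟨hx1, hxF⟩ := Finset.mem_sdiff.1 hx
        obtain ⟨hxG, hxv⟩ := Finset.mem_sdiff.1 hx1
        rcases Finset.mem_insert.1 (hsub hxG) with h | h
        · exact absurd h (by simpa using hxv)
        rcases Finset.mem_union.1 h with h | h
        · exact (Finset.mem_sdiff.1 h).1
        · exact absurd ((Finset.mem_erase.1 h).2) hxF
      · -- G = (G ∩ {v}) ∪ ((G ∩ F) ∪ ((G \ {v}) \ F))
        ext x
        simp only [Finset.mem_union, Finset.mem_inter, Finset.mem_sdiff, Finset.mem_singleton]
        constructor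
        · intro hx
          by_cases hxv : x = v
          · exact Or.inl ⟨hx, hxv⟩
          by_cases hxF : x ∈ F
          · exact Or.inr (Or.inl ⟨hx, hxF⟩)
          · exact Or.inr (Or.inr ⟨⟨hx, hxv⟩, hxF⟩)
        · rintro (⟨h, _⟩ | ⟨h, _⟩ | ⟨⟨h, _⟩, _⟩) <;> exact h

/-- Faces of `Diam(Γ_i)`. -/
def Dfaces (d i : ℕ) : Set (Finset (V d)) :=
  {G | ∃ S, S ⊆ Finset.Ioc i d ∧ G ⊆ Gfc d i S}

/-- Intermediate complexes during subdivision. -/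
def DCfam (d i m : ℕ) : Set (Finset (V d)) :=
  {G | ∃ S, S ⊆ Finset.Ioc i m ∧ ∃ x ∈ Finset.Ioc m (d+1), G ⊆ Fc d i m x S}

lemma newV_not_mem_Fc {d i m x s : ℕ} {S : Finset ℕ} (him : i ≤ m) (hs : m < s) (hsd : s ≤ d) :
    newV d s ∉ Fc d i m x S := by
  rw [newV_eq hsd]
  simp only [mem_Fc_inr]
  omega

lemma Fsub_subset_Fc_iff {d i m x : ℕ} {S : Finset ℕ} (hx : x ∈ Finset.Ioc m (d+1))
    (him : i ≤ m) : Fsub d (m+1) ⊆ Fc d i m x S ↔ x = m+1 := by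
  simp only [Finset.mem_Ioc] at hx
  constructor
  · intro h
    by_contra hne
    have hxm : m+1 < x := by omega
    have : (Sum.inl ⟨x, by omega⟩ : V d) ∈ Fsub d (m+1) := by
      rw [mem_Fsub_iff]; exact ⟨_, rfl, by simpa using hxm⟩
    have := h this
    rw [mem_Fc_inl] at this
    simp only at this
    omega
  · rintro rfl
    intro z hz
    rw [mem_Fsub_iff] at hz
    obtain ⟨a, rfl, ha⟩ := hz
    rw [mem_Fc_inl]
    omega

@[simp] lemma inl_mem_Fsub {d j : ℕ} {a : Fin (d+2)} :
    Sum.inl a ∈ Fsub d j ↔ j < a.val := by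
  rw [mem_Fsub_iff]
  constructor
  · rintro ⟨b, hb, h⟩
    have : a = b := by injection hb
    omega
  · intro h; exact ⟨a, rfl, h⟩

@[simp] lemma inr_mem_Fsub {d j : ℕ} {a : Fin (d+1)} :
    Sum.inr a ∉ Fsub d j := by
  rw [mem_Fsub_iff]
  rintro ⟨b, hb, h⟩
  exact absurd hb (by simp)

lemma Fc_step_keep {d i m x : ℕ} {S : Finset ℕ} (hx : m+1 < x) (him : i ≤ m)
    (hS : S ⊆ Finset.Ioc i m) : Fc d i m x S = Fc d i (m+1) x S := by
  have hm1 : m+1 ∉ S := fun h => by have := hS h; simp only [Finset.mem_Ioc] at this; omega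
  ext z
  rcases z with a | a <;>
  · by_cases ha : a.val ∈ S
    · have := hS ha; simp only [Finset.mem_Ioc] at this
      simp only [Finset.mem_insert, Finset.mem_union, Finset.mem_sdiff, Finset.mem_erase, mem_Fc_inl, mem_Fc_inr, inl_mem_Fsub, inr_mem_Fsub, Sum.inl.injEq, Sum.inr.injEq, Fin.ext_iff, reduceCtorEq, ne_eq, ha, not_true_eq_false, not_false_eq_true, and_false, false_and, and_true, true_and, false_or, or_false, true_or, or_true, iff_true, true_iff, iff_false, false_iff, not_or] <;> omega
    · simp only [Finset.mem_insert, Finset.mem_union, Finset.mem_sdiff, Finset.mem_erase, mem_Fc_inl, mem_Fc_inr, inl_mem_Fsub, inr_mem_Fsub, Sum.inl.injEq, Sum.inr.injEq, Fin.ext_iff, reduceCtorEq, ne_eq, ha, not_true_eq_false, not_false_eq_true, and_false, false_and, and_true, true_and, false_or, or_false, true_or, or_true, iff_true, true_iff, iff_false, false_iff, not_or] <;> omega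

lemma Fc_step_new {d i m y : ℕ} {S : Finset ℕ} (him : i ≤ m) (hmd : m+1 ≤ d)
    (hy : m+1 < y) (hyd : y ≤ d+1) (hS : S ⊆ Finset.Ioc i m) :
    insert (newV d (m+1)) ((Fc d i m (m+1) S \ Fsub d (m+1)) ∪
        (Fsub d (m+1)).erase (origV d y)) = Fc d i (m+1) y (insert (m+1) S) := by
  have hm1 : m+1 ∉ S := fun h => by have := hS h; simp only [Finset.mem_Ioc] at this; omega
  ext z
  rcases z with a | a <;> rw [newV_eq hmd, origV_eq hyd] <;>
  · by_cases ha : a.val ∈ S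
    · have := hS ha; simp only [Finset.mem_Ioc] at this
      simp only [Finset.mem_insert, Finset.mem_union, Finset.mem_sdiff, Finset.mem_erase, mem_Fc_inl, mem_Fc_inr, inl_mem_Fsub, inr_mem_Fsub, Sum.inl.injEq, Sum.inr.injEq, Fin.ext_iff, reduceCtorEq, ne_eq, ha, not_true_eq_false, not_false_eq_true, and_false, false_and, and_true, true_and, false_or, or_false, true_or, or_true, iff_true, true_iff, iff_false, false_iff, not_or] ; omega
    · simp only [Finset.mem_insert, Finset.mem_union, Finset.mem_sdiff, Finset.mem_erase, mem_Fc_inl, mem_Fc_inr, inl_mem_Fsub, inr_mem_Fsub, Sum.inl.injEq, Sum.inr.injEq, Fin.ext_iff, reduceCtorEq, ne_eq, ha, not_true_eq_false, not_false_eq_true, and_false, false_and, and_true, true_and, false_or, or_false, true_or, or_true, iff_true, true_iff, iff_false, false_iff, not_or] <;> omega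


@[simp] lemma inl_mem_Gface {d i : ℕ} {a : Fin (d+2)} :
    Sum.inl a ∈ Gface d i ↔ a.val ≠ i := by
  rw [Gface_eq_filter]; simp

@[simp] lemma inr_mem_Gface {d i : ℕ} {a : Fin (d+1)} :
    Sum.inr a ∉ Gface d i := by
  rw [Gface_eq_filter]; simp

lemma newV_not_mem_Gface {d j i : ℕ} : newV d j ∉ Gface d i := by
  unfold newV; exact inr_mem_Gface

lemma GammaC_downclosure {d i : ℕ} :
    GammaC d i = {G | ∃ _c ∈ (Set.univ : Set Unit), G ⊆ Gface d i} := by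
  ext G; simp [GammaC, simplexOn]

lemma DCfam_downclosure {d i m : ℕ} :
    DCfam d i m = {G | ∃ c ∈ {p : Finset ℕ × ℕ | p.1 ⊆ Finset.Ioc i m ∧
      p.2 ∈ Finset.Ioc m (d+1)}, G ⊆ Fc d i m c.2 c.1} := by
  ext G
  constructor
  · rintro ⟨S, hS, x, hx, hsub⟩; exact ⟨(S, x), ⟨hS, hx⟩, hsub⟩
  · rintro ⟨⟨S, x⟩, ⟨hS, hx⟩, hsub⟩; exact ⟨S, hS, x, hx, hsub⟩

lemma sd_gamma_trivial {d j i : ℕ} (hj : j < i) (hi : i ≤ d+1) :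
    sdC (newV d j) (Fsub d j) (GammaC d i) = GammaC d i := by
  rw [GammaC_downclosure, sd_downclosure _ _ _ _ (fun _ _ => newV_not_mem_Gface)]
  have hns : ¬ Fsub d j ⊆ Gface d i := by
    intro h
    have h1 : origV d i ∈ Fsub d j := by rw [origV_eq hi, inl_mem_Fsub]; exact hj
    have := h h1
    rw [origV_eq hi, inl_mem_Gface] at this
    exact this rfl
  ext G
  constructor
  · rintro (⟨c, _, _, hsub⟩ | ⟨c, _, hFs, _⟩)
    · exact ⟨c, trivial, hsub⟩
    · exact absurd hFs hns
  · rintro ⟨c, _, hsub⟩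
    exact Or.inl ⟨c, trivial, hns, hsub⟩

lemma Gface_sd_facet {d i y : ℕ} (hi : i ≤ d) (hy : i < y) (hyd : y ≤ d+1) :
    insert (newV d i) ((Gface d i \ Fsub d i) ∪ (Fsub d i).erase (origV d y)) =
      Fc d i i y ∅ := by
  ext z
  rcases z with a | a <;> rw [newV_eq hi, origV_eq hyd] <;>
    simp only [Finset.mem_insert, Finset.mem_union, Finset.mem_sdiff, Finset.mem_erase,
      mem_Fc_inl, mem_Fc_inr, inl_mem_Fsub, inr_mem_Fsub, inl_mem_Gface, inr_mem_Gface,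
      Sum.inl.injEq, Sum.inr.injEq, Fin.ext_iff, reduceCtorEq, ne_eq, Finset.notMem_empty,
      not_true_eq_false, not_false_eq_true, and_false, false_and, and_true, true_and,
      false_or, or_false, true_or, or_true, iff_true, true_iff, iff_false, false_iff,
      not_or, not_lt] <;> omega

lemma sd_gamma_init {d i : ℕ} (hi : i ≤ d) :
    sdC (newV d i) (Fsub d i) (GammaC d i) = DCfam d i i := by
  rw [GammaC_downclosure, sd_downclosure _ _ _ _ (fun _ _ => newV_not_mem_Gface)]
  have hFs : Fsub d i ⊆ Gface d i := by
    intro z hz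
    rw [mem_Fsub_iff] at hz
    obtain ⟨a, rfl, ha⟩ := hz
    rw [inl_mem_Gface]; omega
  ext G
  constructor
  · rintro (⟨_, _, hns, _⟩ | ⟨_, _, _, y', hy', hsub⟩)
    · exact absurd hFs hns
    · rw [mem_Fsub_iff] at hy'
      obtain ⟨a, rfl, ha⟩ := hy'
      have : (Sum.inl a : V d) = origV d a.val := by rw [origV_eq (by omega)]
      rw [this, Gface_sd_facet hi ha (by omega)] at hsub
      exact ⟨∅, by simp, a.val, by simp [Finset.mem_Ioc]; omega, hsub⟩
  · rintro ⟨S, hS, x, hx, hsub⟩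
    simp only [Finset.Ioc_self, Finset.subset_empty] at hS
    subst hS
    simp only [Finset.mem_Ioc] at hx
    right
    refine ⟨(), trivial, hFs, origV d x, ?_, ?_⟩
    · rw [origV_eq (by omega), inl_mem_Fsub]; exact hx.1
    · rw [Gface_sd_facet hi hx.1 hx.2]; exact hsub

lemma sd_DCfam {d i m : ℕ} (him : i ≤ m) (hmd : m+1 ≤ d) :
    sdC (newV d (m+1)) (Fsub d (m+1)) (DCfam d i m) = DCfam d i (m+1) := by
  rw [DCfam_downclosure,
    sd_downclosure _ _ _ _ (fun c _ => newV_not_mem_Fc him (Nat.lt_succ_self m) hmd)]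
  ext G
  constructor
  · rintro (⟨⟨S, x⟩, ⟨hS, hx⟩, hns, hsub⟩ | ⟨⟨S, x⟩, ⟨hS, hx⟩, hFs, y', hy', hsub⟩)
    · have hxne : x ≠ m+1 := fun h => hns ((Fsub_subset_Fc_iff hx him).2 h)
      have hx' : m+1 < x := by simp only [Finset.mem_Ioc] at hx; omega
      refine ⟨S, hS.trans (Finset.Ioc_subset_Ioc_right (by omega)), x, ?_, ?_⟩
      · simp only [Finset.mem_Ioc] at hx ⊢; omega
      · rw [← Fc_step_keep hx' him hS]; exact hsub
    · have hxeq : x = m+1 := (Fsub_subset_Fc_iff hx him).1 hFs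
      subst hxeq
      rw [mem_Fsub_iff] at hy'
      obtain ⟨a, rfl, ha⟩ := hy'
      have : (Sum.inl a : V d) = origV d a.val := by rw [origV_eq (by omega)]
      rw [this, Fc_step_new him hmd ha (by omega) hS] at hsub
      refine ⟨insert (m+1) S, ?_, a.val, ?_, hsub⟩
      · intro z hz
        rcases Finset.mem_insert.1 hz with rfl | hz
        · simp [Finset.mem_Ioc]; omega
        · have := hS hz; simp only [Finset.mem_Ioc] at this ⊢; omega
      · simp only [Finset.mem_Ioc]; omega
  · rintro ⟨S', hS', x, hx, hsub⟩
    simp only [Finset.mem_Ioc] at hx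
    by_cases hmem : m+1 ∈ S'
    · right
      refine ⟨(S'.erase (m+1), m+1), ⟨?_, by simp [Finset.mem_Ioc]; omega⟩,
        (Fsub_subset_Fc_iff (by simp [Finset.mem_Ioc]; omega) him).2 rfl,
        origV d x, ?_, ?_⟩
      · intro z hz
        have hz1 := Finset.mem_of_mem_erase hz
        have hz2 := Finset.ne_of_mem_erase hz
        have := hS' hz1; simp only [Finset.mem_Ioc] at this ⊢; omega
      · rw [origV_eq (by omega), inl_mem_Fsub]; exact hx.1
      · rw [Fc_step_new him hmd (by omega) (by omega) ?_]
        · rw [Finset.insert_erase hmem]; exact hsub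
        · intro z hz
          have hz1 := Finset.mem_of_mem_erase hz
          have hz2 := Finset.ne_of_mem_erase hz
          have := hS' hz1; simp only [Finset.mem_Ioc] at this ⊢; omega
    · left
      have hS'm : S' ⊆ Finset.Ioc i m := by
        intro z hz
        have := hS' hz; simp only [Finset.mem_Ioc] at this ⊢
        have : z ≠ m+1 := fun h => hmem (h ▸ hz)
        omega
      have hx' : m+1 < x := hx.1
      refine ⟨(S', x), ⟨hS'm, by simp [Finset.mem_Ioc]; omega⟩, ?_, ?_⟩
      · intro h
        have := (Fsub_subset_Fc_iff (by simp [Finset.mem_Ioc]; omega) him).1 h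
        omega
      · rw [Fc_step_keep hx' him hS'm]; exact hsub

lemma foldl_range_succ {α : Type*} (f : α → ℕ → α) (Δ : α) (n : ℕ) :
    (List.range (n+1)).foldl f Δ = f ((List.range n).foldl f Δ) n := by
  rw [List.range_succ, List.foldl_append]; rfl

lemma fold_GammaC {d i : ℕ} (hi : i ≤ d+1) :
    ∀ j, j ≤ d+1 →
      (List.range j).foldl (fun Γ t => sdC (newV d t) (Fsub d t) Γ) (GammaC d i) =
        if j ≤ i then GammaC d i else DCfam d i (j-1) := by
  intro j
  induction j with
  | zero => intro _; rw [if_pos (Nat.zero_le i)]; rfl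
  | succ j ih =>
    intro hj
    rw [foldl_range_succ, ih (by omega)]
    by_cases h1 : j + 1 ≤ i
    · rw [if_pos (by omega), if_pos h1]
      exact sd_gamma_trivial (by omega) hi
    · by_cases h2 : j ≤ i
      · have : j = i := by omega
        subst this
        rw [if_pos le_rfl, if_neg h1]
        simpa using sd_gamma_init (by omega)
      · rw [if_neg h2, if_neg h1]
        obtain ⟨m, rfl⟩ : ∃ m, j = m + 1 := ⟨j - 1, by omega⟩
        simpa using sd_DCfam (by omega) (by omega)

lemma GammaC_top {d : ℕ} : GammaC d (d+1) = Dfaces d (d+1) := by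
  have hGf : Gface d (d+1) = Gfc d (d+1) (∅ : Finset ℕ) := by
    ext z
    rcases z with a | a
    · simp only [inl_mem_Gface, mem_Gfc_inl, Finset.notMem_empty]
      have := a.isLt; omega
    · simp only [mem_Gfc_inr, Finset.notMem_empty]
      have := a.isLt
      constructor
      · intro h; exact absurd h inr_mem_Gface
      · rintro (h | h) <;> omega
  ext G
  constructor
  · intro h
    exact ⟨∅, by simp, hGf ▸ h⟩
  · rintro ⟨S, hS, hsub⟩
    have : S = ∅ := by
      rw [Finset.Ioc_eq_empty (by omega)] at hS
      exact Finset.subset_empty.1 hS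
    subst this
    show G ⊆ Gface d (d+1)
    rw [hGf]; exact hsub

theorem Diam_GammaC {d i : ℕ} (hi : i ≤ d+1) : Diam d (GammaC d i) = Dfaces d i := by
  unfold Diam
  rw [fold_GammaC hi (d+1) le_rfl]
  by_cases hid : d + 1 ≤ i
  · rw [if_pos hid]
    have : i = d+1 := by omega
    subst this
    exact GammaC_top
  · rw [if_neg hid]
    simp only [Nat.add_sub_cancel]
    ext G
    constructor
    · rintro ⟨S, hS, x, hx, hsub⟩
      simp only [Finset.mem_Ioc] at hx
      have : x = d+1 := by omega
      subst this
      exact ⟨S, hS, Fc_last ▸ hsub⟩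
    · rintro ⟨S, hS, hsub⟩
      exact ⟨S, hS, d+1, by simp [Finset.mem_Ioc], Fc_last ▸ hsub⟩

lemma Gfc_subset_iff {d i i' : ℕ} {S S' : Finset ℕ} (hi : i ≤ d+1) (hi' : i' ≤ d+1)
    (hS : S ⊆ Finset.Ioc i d) (hS' : S' ⊆ Finset.Ioc i' d) :
    Gfc d i S ⊆ Gfc d i' S' ↔ i = i' ∧ S = S' := by
  constructor
  · intro h
    have hii : i = i' := by
      by_contra hne
      rcases Nat.lt_or_ge i i' with hlt | hge
      · have h1 : newV d i ∈ Gfc d i S := by rw [mem_Gfc_newV (by omega)]; left; rfl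
        have := h h1
        rw [mem_Gfc_newV (by omega)] at this
        rcases this with h2 | h2
        · omega
        · have := hS' h2.2; simp only [Finset.mem_Ioc] at this; omega
      · have hlt : i' < i := by omega
        have h1 : origV d i' ∈ Gfc d i S := by rw [mem_Gfc_origV (by omega)]; left; exact hlt
        have := h h1
        rw [mem_Gfc_origV (by omega)] at this
        omega
    subst hii
    refine ⟨rfl, ?_⟩
    ext j
    constructor
    · intro hj
      have hb := hS hj; simp only [Finset.mem_Ioc] at hb
      have h1 : newV d j ∈ Gfc d i S := by rw [mem_Gfc_newV (by omega)]; right; exact ⟨hb.1, hj⟩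
      have := h h1
      rw [mem_Gfc_newV (by omega)] at this
      rcases this with h2 | h2
      · omega
      · exact h2.2
    · intro hj
      by_contra hns
      have hb := hS' hj; simp only [Finset.mem_Ioc] at hb
      have h1 : origV d j ∈ Gfc d i S := by
        rw [mem_Gfc_origV (by omega)]; right; exact ⟨hb.1, hb.2, hns⟩
      have := h h1
      rw [mem_Gfc_origV (by omega)] at this
      rcases this with h2 | h2
      · omega
      · exact h2.2.2 hj
  · rintro ⟨rfl, rfl⟩; exact subset_rfl

lemma isFacet_Dfaces_iff {d i : ℕ} (hi : i ≤ d+1) {F : Finset (V d)} :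
    isFacet (Dfaces d i) F ↔ ∃ S, S ⊆ Finset.Ioc i d ∧ F = Gfc d i S := by
  constructor
  · rintro ⟨⟨S, hS, hsub⟩, hmax⟩
    exact ⟨S, hS, (hmax (Gfc d i S) ⟨S, hS, subset_rfl⟩ hsub).symm⟩
  · rintro ⟨S, hS, rfl⟩
    refine ⟨⟨S, hS, subset_rfl⟩, ?_⟩
    rintro G ⟨S', hS', hsub⟩ hsup
    have := (Gfc_subset_iff hi hi hS hS').1 (hsup.trans hsub)
    rw [this.2] at hsup ⊢
    exact hsub.antisymm hsup

lemma sdC_biUnion {W : Type*} [DecidableEq W] {ι : Type*} (v : W) (F : Finset W)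
    (T : Set ι) (D : ι → Set (Finset W)) :
    sdC v F {G | ∃ i ∈ T, G ∈ D i} = {G | ∃ i ∈ T, G ∈ sdC v F (D i)} := by
  ext G
  constructor
  · rintro (⟨⟨i, hi, hGD⟩, hnF⟩ | ⟨a, ha, s, ⟨b, hb, e, ⟨hde, i, hi, hFe⟩, rfl⟩, rfl⟩)
    · exact ⟨i, hi, Or.inl ⟨hGD, hnF⟩⟩
    · exact ⟨i, hi, Or.inr ⟨a, ha, b ∪ e, ⟨b, hb, e, ⟨hde, hFe⟩, rfl⟩, rfl⟩⟩
  · rintro ⟨i, hi, (⟨hGD, hnF⟩ | ⟨a, ha, s, ⟨b, hb, e, ⟨hde, hFe⟩, rfl⟩, rfl⟩)⟩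
    · exact Or.inl ⟨⟨i, hi, hGD⟩, hnF⟩
    · exact Or.inr ⟨a, ha, b ∪ e, ⟨b, hb, e, ⟨hde, i, hi, hFe⟩, rfl⟩, rfl⟩

lemma foldl_sd_biUnion {W : Type*} [DecidableEq W] {ι : Type*} (T : Set ι) :
    ∀ (L : List ℕ) (vf : ℕ → W) (Ff : ℕ → Finset W) (D : ι → Set (Finset W)),
    L.foldl (fun Γ t => sdC (vf t) (Ff t) Γ) {G | ∃ i ∈ T, G ∈ D i} =
      {G | ∃ i ∈ T, G ∈ L.foldl (fun Γ t => sdC (vf t) (Ff t) Γ) (D i)}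
  | [], _, _, _ => rfl
  | (t :: L), vf, Ff, D => by
    simp only [List.foldl_cons]
    rw [sdC_biUnion, foldl_sd_biUnion T L vf Ff (fun i => sdC (vf t) (Ff t) (D i))]

lemma DiamU_faces {d : ℕ} (l : List ℕ) (hle : ∀ i ∈ l, i ≤ d+1) :
    DiamU d l.toFinset = {G | ∃ i ∈ l, G ∈ Dfaces d i} := by
  unfold DiamU Diam
  have h1 : GammaU d l.toFinset = {G | ∃ i ∈ {i : ℕ | i ∈ l.toFinset}, G ∈ GammaC d i} := by
    ext G
    simp only [GammaU, GammaC, simplexOn, Set.mem_setOf_eq, Finset.mem_coe]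
  rw [h1]
  rw [foldl_sd_biUnion {i | i ∈ l.toFinset} (List.range (d+1)) (newV d) (Fsub d)
    (fun i => GammaC d i)]
  ext G
  constructor
  · rintro ⟨i, hi, hG⟩
    rw [Set.mem_setOf_eq, List.mem_toFinset] at hi
    rw [show (List.range (d+1)).foldl (fun Γ t => sdC (newV d t) (Fsub d t) Γ) (GammaC d i)
      = Diam d (GammaC d i) from rfl, Diam_GammaC (hle i hi)] at hG
    exact ⟨i, hi, hG⟩
  · rintro ⟨i, hi, hG⟩
    refine ⟨i, Set.mem_setOf_eq ▸ List.mem_toFinset.2 hi, ?_⟩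
    rw [show (List.range (d+1)).foldl (fun Γ t => sdC (newV d t) (Fsub d t) Γ) (GammaC d i)
      = Diam d (GammaC d i) from rfl, Diam_GammaC (hle i hi)]
    exact hG

lemma isFacet_DiamU_iff {d : ℕ} (l : List ℕ) (hle : ∀ i ∈ l, i ≤ d+1) {F : Finset (V d)} :
    isFacet (DiamU d l.toFinset) F ↔ ∃ i ∈ l, ∃ S, S ⊆ Finset.Ioc i d ∧ F = Gfc d i S := by
  rw [DiamU_faces l hle]
  constructor
  · rintro ⟨⟨i, hi, S, hS, hsub⟩, hmax⟩
    exact ⟨i, hi, S, hS, (hmax (Gfc d i S) ⟨i, hi, S, hS, subset_rfl⟩ hsub).symm⟩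
  · rintro ⟨i, hi, S, hS, rfl⟩
    refine ⟨⟨i, hi, S, hS, subset_rfl⟩, ?_⟩
    rintro G ⟨i', hi', S', hS', hsub⟩ hsup
    obtain ⟨h1, h2⟩ := (Gfc_subset_iff (hle i hi) (hle i' hi') hS hS').1 (hsup.trans hsub)
    subst h1; subst h2
    exact hsub.antisymm hsup

section ListLemmas
variable {α : Type*}

lemma flatten_getD_eq (Ls : List (List α)) (dflt : α) :
    ∀ (ℓ s : ℕ), ℓ < Ls.length → s < (Ls.getD ℓ []).length →
    Ls.flatten.getD ((Ls.take ℓ).flatten.length + s) dflt = (Ls.getD ℓ []).getD s dflt := by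
  induction Ls with
  | nil => intro ℓ s h; simp at h
  | cons a t ih =>
    intro ℓ s hℓ hs
    cases ℓ with
    | zero =>
      rw [List.getD_cons_zero] at hs ⊢
      simp only [List.take_zero, List.flatten_nil, List.length_nil, Nat.zero_add,
        List.flatten_cons]
      exact List.getD_append _ _ _ _ hs
    | succ ℓ =>
      rw [List.getD_cons_succ] at hs ⊢
      simp only [List.take_succ_cons, List.flatten_cons, List.length_append]
      rw [Nat.add_assoc, List.getD_append_right _ _ _ _ (Nat.le_add_right _ _),
        Nat.add_sub_cancel_left]
      exact ih ℓ s (by simpa using hℓ) hs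

lemma flatten_off_succ (Ls : List (List α)) (ℓ : ℕ) (hℓ : ℓ < Ls.length) :
    (Ls.take (ℓ+1)).flatten.length = (Ls.take ℓ).flatten.length + (Ls.getD ℓ []).length := by
  rw [List.take_succ, List.flatten_append, List.length_append]
  congr 1
  rw [List.getElem?_eq_getElem hℓ]
  simp only [Option.toList_some, List.flatten_cons, List.flatten_nil, List.append_nil]
  rw [List.getD_eq_getElem _ _ hℓ]

lemma flatten_off_mono (Ls : List (List α)) {ℓ' ℓ : ℕ} (h : ℓ' ≤ ℓ) :
    (Ls.take ℓ').flatten.length ≤ (Ls.take ℓ).flatten.length := by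
  obtain ⟨k, rfl⟩ := Nat.exists_eq_add_of_le h
  rw [List.take_add, List.flatten_append, List.length_append]
  omega

lemma flatten_index_decomp (Ls : List (List α)) :
    ∀ j, j < Ls.flatten.length →
    ∃ ℓ, ℓ < Ls.length ∧ ∃ s, s < (Ls.getD ℓ []).length ∧
      j = (Ls.take ℓ).flatten.length + s := by
  induction Ls with
  | nil => intro j h; simp at h
  | cons a t ih =>
    intro j hj
    simp only [List.flatten_cons, List.length_append] at hj
    by_cases h : j < a.length
    · exact ⟨0, by simp, j, by simpa using h, by simp⟩
    · obtain ⟨ℓ, hℓ, s, hs, he⟩ := ih (j - a.length) (by omega)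
      refine ⟨ℓ+1, by simpa using hℓ, s, hs, ?_⟩
      simp only [List.take_succ_cons, List.flatten_cons, List.length_append]
      omega

lemma flatten_prefix_decomp (Ls : List (List α)) (ℓ : ℕ) :
    ∀ j, j < (Ls.take ℓ).flatten.length →
    ∃ ℓ', ℓ' < ℓ ∧ ℓ' < Ls.length ∧ ∃ s, s < (Ls.getD ℓ' []).length ∧
      j = (Ls.take ℓ').flatten.length + s := by
  intro j hj
  obtain ⟨ℓ', hℓ', s, hs, he⟩ := flatten_index_decomp (Ls.take ℓ) j hj
  rw [List.length_take] at hℓ'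
  have h1 : ℓ' < ℓ := lt_of_lt_of_le hℓ' (min_le_left _ _)
  have h2 : ℓ' < Ls.length := lt_of_lt_of_le hℓ' (min_le_right _ _)
  have hgd : (Ls.take ℓ).getD ℓ' [] = Ls.getD ℓ' [] := by
    rw [List.getD_eq_getElem _ _ (by rwa [List.length_take]), List.getElem_take,
      List.getD_eq_getElem _ _ h2]
  have htt : (Ls.take ℓ).take ℓ' = Ls.take ℓ' := by
    rw [List.take_take, min_eq_left (le_of_lt h1)]
  rw [hgd] at hs
  rw [htt] at he
  exact ⟨ℓ', h1, h2, s, hs, he⟩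

lemma mem_of_getD {l : List α} {s : ℕ} (h : s < l.length) (d : α) : l.getD s d ∈ l := by
  rw [List.getD_eq_getElem _ _ h]; exact List.getElem_mem h

end ListLemmas

open scoped symmDiff
lemma symmDiff_subset_Ioc {i d : ℕ} {S S0 : Finset ℕ} (hS : S ⊆ Finset.Ioc i d)
    (hS0 : S0 ⊆ Finset.Ioc i d) : S ∆ S0 ⊆ Finset.Ioc i d := by
  intro j hj
  rw [Finset.mem_symmDiff] at hj
  rcases hj with ⟨h, _⟩ | ⟨h, _⟩
  · exact hS h
  · exact hS0 h

lemma diffSet_Gfc {d i : ℕ} {S S0 : Finset ℕ} (hS : S ⊆ Finset.Ioc i d)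
    (hS0 : S0 ⊆ Finset.Ioc i d) :
    diffSet d (Finset.Ioc i d) (Gfc d i S0) (Gfc d i S) = S ∆ S0 := by
  ext j
  simp only [diffSet, Finset.mem_filter, Finset.mem_Ioc, Finset.mem_symmDiff]
  constructor
  · rintro ⟨⟨h1, h2⟩, hne⟩
    rw [ne_eq, decide_eq_decide, mem_Gfc_origV (show j ≤ d+1 by omega),
      mem_Gfc_origV (show j ≤ d+1 by omega)] at hne
    by_cases hS' : j ∈ S <;> by_cases hS0' : j ∈ S0 <;> simp_all <;> omega
  · intro h
    have hj : i < j ∧ j ≤ d := by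
      rcases h with ⟨h, _⟩ | ⟨h, _⟩
      · have := hS h; simpa [Finset.mem_Ioc] using this
      · have := hS0 h; simpa [Finset.mem_Ioc] using this
    refine ⟨hj, ?_⟩
    rw [ne_eq, decide_eq_decide, mem_Gfc_origV (show j ≤ d+1 by omega),
      mem_Gfc_origV (show j ≤ d+1 by omega)]
    rcases h with ⟨h1, h2⟩ | ⟨h1, h2⟩ <;> simp [h1, h2] <;> omega

lemma symmDiff_insert_eq {j : ℕ} {S S0 : Finset ℕ} (hjS : j ∉ S) (hjD : j ∈ S ∆ S0) :
    (insert j S) ∆ S0 = (S ∆ S0).erase j := by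
  have hj0 : j ∈ S0 := by
    rw [Finset.mem_symmDiff] at hjD
    rcases hjD with ⟨h, _⟩ | ⟨h, _⟩
    · exact absurd h hjS
    · exact h
  ext m
  by_cases hm : m = j
  · subst hm
    simp [Finset.mem_symmDiff, Finset.mem_erase, hj0]
  · simp [Finset.mem_symmDiff, Finset.mem_erase, hm]

lemma symmDiff_erase_eq {j : ℕ} {S S0 : Finset ℕ} (hjS : j ∈ S) (hjD : j ∈ S ∆ S0) :
    (S.erase j) ∆ S0 = (S ∆ S0).erase j := by
  have hj0 : j ∉ S0 := by
    rw [Finset.mem_symmDiff] at hjD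
    rcases hjD with ⟨_, h⟩ | ⟨_, h⟩
    · exact h
    · exact absurd hjS h
  ext m
  by_cases hm : m = j
  · subst hm
    simp [Finset.mem_symmDiff, Finset.mem_erase, hj0, hjS]
  · simp [Finset.mem_symmDiff, Finset.mem_erase, hm]

lemma Gfc_drop_orig {d iu il : ℕ} {S : Finset ℕ} (hu : iu < il) (hld : il ≤ d+1)
    (hS : S ⊆ Finset.Ioc il d) {z : V d} (hz : z ∈ Gfc d il S) (hne : z ≠ origV d iu) :
    z ∈ Gfc d iu ((insert il S) ∩ Finset.Ioc iu d) := by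
  rw [origV_eq (by omega)] at hne
  have hmem : ∀ b : ℕ, b ∈ (insert il S) ∩ Finset.Ioc iu d ↔
      ((b = il ∨ b ∈ S) ∧ (iu < b ∧ b ≤ d)) := by
    intro b; simp [Finset.mem_inter, Finset.mem_insert, Finset.mem_Ioc, and_assoc]
  rcases z with a | a
  · rw [mem_Gfc_inl] at hz ⊢
    have hne' : a.val ≠ iu := fun h => hne (by apply congrArg; exact Fin.ext h)
    rcases hz with h | ⟨h1, h2, h3⟩
    · by_cases ha : a.val ∈ S
      · exact absurd (hS ha) (by simp only [Finset.mem_Ioc]; omega)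
      · rw [hmem]
        simp only [ha, or_false]
        omega
    · rw [hmem]
      simp only [h3, or_false]
      omega
  · rw [mem_Gfc_inr] at hz ⊢
    have hlt := a.isLt
    rw [hmem]
    rcases hz with h | ⟨h1, h2⟩
    · right
      exact ⟨by omega, Or.inl h, by omega, by omega⟩
    · have := hS h2; simp only [Finset.mem_Ioc] at this
      right
      exact ⟨by omega, Or.inr h2, by omega, by omega⟩

lemma Gfc_flip_insert {d i j : ℕ} {S : Finset ℕ} (hji : i < j) (hjd : j ≤ d) (hjS : j ∉ S)
    {z : V d} (hz : z ∈ Gfc d i S) (hne : z ≠ origV d j) : z ∈ Gfc d i (insert j S) := by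
  rw [origV_eq (by omega : j ≤ d+1)] at hne
  rcases z with a | a
  · rw [mem_Gfc_inl] at hz ⊢
    have hne' : a.val ≠ j := fun h => hne (by apply congrArg; exact Fin.ext h)
    rcases hz with h | ⟨h1, h2, h3⟩
    · exact Or.inl h
    · right
      refine ⟨h1, h2, fun hc => ?_⟩
      rcases Finset.mem_insert.1 hc with hc | hc
      · exact hne' hc
      · exact h3 hc
  · rw [mem_Gfc_inr] at hz ⊢
    rcases hz with h | ⟨h1, h2⟩
    · exact Or.inl h
    · exact Or.inr ⟨h1, Finset.mem_insert_of_mem h2⟩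

lemma Gfc_flip_erase {d i j : ℕ} {S : Finset ℕ} (hji : i < j) (hjd : j ≤ d) (hjS : j ∈ S)
    {z : V d} (hz : z ∈ Gfc d i S) (hne : z ≠ newV d j) : z ∈ Gfc d i (S.erase j) := by
  rw [newV_eq hjd] at hne
  rcases z with a | a
  · rw [mem_Gfc_inl] at hz ⊢
    rcases hz with h | ⟨h1, h2, h3⟩
    · exact Or.inl h
    · exact Or.inr ⟨h1, h2, fun hc => h3 (Finset.mem_of_mem_erase hc)⟩
  · rw [mem_Gfc_inr] at hz ⊢
    have hne' : a.val ≠ j := fun h => hne (by apply congrArg; exact Fin.ext h)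
    rcases hz with h | ⟨h1, h2⟩
    · exact Or.inl h
    · exact Or.inr ⟨h1, Finset.mem_erase.2 ⟨hne', h2⟩⟩

lemma mem_posVerts_origV {d j : ℕ} {F : Finset (V d)} {D : Finset ℕ} (hjD : j ∈ D)
    (hF : origV d j ∈ F) : origV d j ∈ posVerts d F D :=
  Finset.mem_filter.2 ⟨hF, ⟨j, hjD, Or.inl rfl⟩⟩

lemma mem_posVerts_newV {d j : ℕ} {F : Finset (V d)} {D : Finset ℕ} (hjD : j ∈ D)
    (hF : newV d j ∈ F) : newV d j ∈ posVerts d F D :=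
  Finset.mem_filter.2 ⟨hF, ⟨j, hjD, Or.inr rfl⟩⟩

lemma posVerts_cases {d i : ℕ} {S D : Finset ℕ} (hS : S ⊆ Finset.Ioc i d)
    (hD : D ⊆ Finset.Ioc i d) {x : V d} (hx : x ∈ posVerts d (Gfc d i S) D) :
    ∃ j ∈ D, (j ∉ S ∧ x = origV d j) ∨ (j ∈ S ∧ x = newV d j) := by
  obtain ⟨hxF, j, hjD, hcase⟩ := Finset.mem_filter.1 hx
  have hj := hD hjD
  simp only [Finset.mem_Ioc] at hj
  refine ⟨j, hjD, ?_⟩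
  rcases hcase with rfl | rfl
  · left
    refine ⟨?_, rfl⟩
    rw [mem_Gfc_origV (by omega)] at hxF
    rcases hxF with h | h
    · omega
    · exact h.2.2
  · right
    refine ⟨?_, rfl⟩
    rw [mem_Gfc_newV (by omega)] at hxF
    rcases hxF with h | h
    · omega
    · exact h.2

lemma getD_mem_take {l : List ℕ} {u ℓ : ℕ} (h1 : u < ℓ) (h2 : u < l.length) :
    l.getD u 0 ∈ l.take ℓ := by
  rw [List.getD_eq_getElem _ _ h2]
  have hlen : u < (l.take ℓ).length := by rw [List.length_take]; omega
  have : (l.take ℓ)[u]'hlen = l[u] := List.getElem_take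
  exact this ▸ List.getElem_mem hlen

lemma mem_take_map_iff {d : ℕ} {l : List ℕ} {ℓ : ℕ} {x : V d} :
    x ∈ ((l.take ℓ).map (origV d)).toFinset ↔
      ∃ u, u < ℓ ∧ u < l.length ∧ x = origV d (l.getD u 0) := by
  rw [List.mem_toFinset, List.mem_map]
  constructor
  · rintro ⟨a, ha, rfl⟩
    rw [List.mem_take_iff_getElem] at ha
    obtain ⟨u, hu, rfl⟩ := ha
    have hu' := lt_min_iff.mp hu
    refine ⟨u, hu'.1, hu'.2, ?_⟩
    rw [List.getD_eq_getElem _ _ hu'.2]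
  · rintro ⟨u, h1, h2, rfl⟩
    exact ⟨l.getD u 0, getD_mem_take h1 h2, rfl⟩

lemma sorted_getD_lt {l : List ℕ} (hl : l.Pairwise (· < ·)) {u ℓ : ℕ} (h1 : u < ℓ)
    (h2 : ℓ < l.length) : l.getD u 0 < l.getD ℓ 0 := by
  rw [List.getD_eq_getElem _ _ (by omega), List.getD_eq_getElem _ _ h2]
  exact List.pairwise_iff_getElem.1 hl u ℓ (by omega) h2 h1

lemma mem_iff_getD {α : Type*} (dflt : α) {l : List α} {a : α} :
    a ∈ l ↔ ∃ s, s < l.length ∧ l.getD s dflt = a := by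
  rw [List.mem_iff_getElem]
  constructor
  · rintro ⟨s, hs, rfl⟩
    exact ⟨s, hs, List.getD_eq_getElem _ _ hs⟩
  · rintro ⟨s, hs, h⟩
    exact ⟨s, hs, by rw [← List.getD_eq_getElem _ _ hs]; exact h⟩

lemma restriction_main (d : ℕ) (l : List ℕ) (hl : l.Pairwise (· < ·))
    (hle : ∀ i ∈ l, i ≤ d+1)
    (F0s : List (Finset (V d)))
    (hF0 : ∀ ℓ < l.length, isFacet (Diam d (GammaC d (l.getD ℓ 0))) (F0s.getD ℓ ∅))
    (Ls : List (List (Finset (V d)))) (hLslen : Ls.length = l.length)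
    (hblocks : ∀ ℓ < l.length,
      IsDegLexOrder d (Finset.Ioc (l.getD ℓ 0) d) (Diam d (GammaC d (l.getD ℓ 0)))
        (F0s.getD ℓ ∅) (Ls.getD ℓ []))
    (ℓ : ℕ) (hℓ : ℓ < l.length) (t : ℕ) (ht : t < (Ls.getD ℓ []).length) :
    IsRestriction Ls.flatten ((Ls.take ℓ).flatten.length + t)
      ((((l.take ℓ).map (origV d)).toFinset) ∪
        posVerts d ((Ls.getD ℓ []).getD t ∅)
          (diffSet d (Finset.Ioc (l.getD ℓ 0) d) (F0s.getD ℓ ∅)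
            ((Ls.getD ℓ []).getD t ∅))) := by
  have hLsℓ : ℓ < Ls.length := by rw [hLslen]; exact hℓ
  set iℓ := l.getD ℓ 0 with hiℓdef
  have hiℓl : iℓ ∈ l := mem_of_getD hℓ 0
  have hiℓd : iℓ ≤ d+1 := hle _ hiℓl
  obtain ⟨hnd, hmemiff, hpair⟩ := hblocks ℓ hℓ
  set Lb := Ls.getD ℓ [] with hLbdef
  set F := Lb.getD t ∅ with hFdef
  have hFbl : F ∈ Lb := mem_of_getD ht ∅
  have hFfac : isFacet (Dfaces d iℓ) F := by
    rw [← Diam_GammaC hiℓd]; exact (hmemiff F).1 hFbl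
  obtain ⟨S, hS, hFeq⟩ := (isFacet_Dfaces_iff hiℓd).1 hFfac
  have hF0fac : isFacet (Dfaces d iℓ) (F0s.getD ℓ ∅) := by
    rw [← Diam_GammaC hiℓd]; exact hF0 ℓ hℓ
  obtain ⟨S0, hS0, hF0eq⟩ := (isFacet_Dfaces_iff hiℓd).1 hF0fac
  have hDeq : diffSet d (Finset.Ioc iℓ d) (F0s.getD ℓ ∅) F = S ∆ S0 := by
    rw [hFeq, hF0eq]; exact diffSet_Gfc hS hS0
  set D := S ∆ S0 with hDdef
  have hDsub : D ⊆ Finset.Ioc iℓ d := symmDiff_subset_Ioc hS hS0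
  have hblockelt : ∀ s, s < Lb.length → ∃ S'', S'' ⊆ Finset.Ioc iℓ d ∧
      Lb.getD s ∅ = Gfc d iℓ S'' ∧
      diffSet d (Finset.Ioc iℓ d) (F0s.getD ℓ ∅) (Lb.getD s ∅) = S'' ∆ S0 := by
    intro s hs
    have hf : isFacet (Dfaces d iℓ) (Lb.getD s ∅) := by
      rw [← Diam_GammaC hiℓd]; exact (hmemiff _).1 (mem_of_getD hs ∅)
    obtain ⟨S'', hS'', heq⟩ := (isFacet_Dfaces_iff hiℓd).1 hf
    exact ⟨S'', hS'', heq, by rw [heq, hF0eq]; exact diffSet_Gfc hS'' hS0⟩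
  have hpair' : ∀ s u, s < u → u < Lb.length →
      dlexLT (diffSet d (Finset.Ioc iℓ d) (F0s.getD ℓ ∅) (Lb.getD s ∅))
             (diffSet d (Finset.Ioc iℓ d) (F0s.getD ℓ ∅) (Lb.getD u ∅)) := by
    intro s u hsu hu
    have h1 := List.pairwise_iff_getElem.1 hpair s u (by omega) hu hsu
    rwa [← List.getD_eq_getElem Lb ∅ (by omega), ← List.getD_eq_getElem Lb ∅ hu] at h1
  have hflat : Ls.flatten.getD ((Ls.take ℓ).flatten.length + t) ∅ = F :=
    flatten_getD_eq Ls ∅ ℓ t hLsℓ ht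
  have hearlier : ∀ j, j < (Ls.take ℓ).flatten.length + t →
      (∃ ℓ' s, ℓ' < ℓ ∧ ℓ' < l.length ∧ s < (Ls.getD ℓ' []).length ∧
        Ls.flatten.getD j ∅ = (Ls.getD ℓ' []).getD s ∅) ∨
      (∃ s, s < t ∧ Ls.flatten.getD j ∅ = Lb.getD s ∅) := by
    intro j hj
    by_cases hjo : j < (Ls.take ℓ).flatten.length
    · obtain ⟨ℓ', h1, h2, s, hs, rfl⟩ := flatten_prefix_decomp Ls ℓ j hjo
      exact Or.inl ⟨ℓ', s, h1, by omega, hs, flatten_getD_eq Ls ∅ ℓ' s h2 hs⟩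
    · right
      refine ⟨j - (Ls.take ℓ).flatten.length, by omega, ?_⟩
      have he : j = (Ls.take ℓ).flatten.length + (j - (Ls.take ℓ).flatten.length) := by omega
      have h2 := flatten_getD_eq Ls ∅ ℓ (j - (Ls.take ℓ).flatten.length) hLsℓ
        (by rw [← hLbdef]; omega)
      rw [← he] at h2
      exact h2
  have hindex : ∀ u, u < ℓ → ∀ V ∈ Ls.getD u [], ∃ j, j < (Ls.take ℓ).flatten.length ∧
      Ls.flatten.getD j ∅ = V := by
    intro u hu V hV
    obtain ⟨s, hs, hVeq⟩ := (mem_iff_getD ∅).1 hV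
    have huLs : u < Ls.length := by omega
    refine ⟨(Ls.take u).flatten.length + s, ?_, ?_⟩
    · have h1 : (Ls.take u).flatten.length + s < (Ls.take (u+1)).flatten.length := by
        rw [flatten_off_succ Ls u huLs]; omega
      have h2 : (Ls.take (u+1)).flatten.length ≤ (Ls.take ℓ).flatten.length :=
        flatten_off_mono Ls (by omega)
      omega
    · rw [flatten_getD_eq Ls ∅ u s huLs hs, hVeq]
  rw [IsRestriction, hflat, hDeq]
  refine ⟨?_, ?_, ?_⟩
  · -- R ⊆ F
    intro x hx
    rcases Finset.mem_union.1 hx with hx | hx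
    · obtain ⟨u, hu1, hu2, rfl⟩ := mem_take_map_iff.1 hx
      have hlt : l.getD u 0 < iℓ := sorted_getD_lt hl hu1 hℓ
      have hule : l.getD u 0 ≤ d+1 := hle _ (mem_of_getD hu2 0)
      rw [hFeq, mem_Gfc_origV hule]
      exact Or.inl hlt
    · exact Finset.filter_subset _ _ hx
  · -- not contained in earlier facets
    intro j hj hsubR
    rcases hearlier j hj with ⟨ℓ', s, h1, h2, hs, hEq⟩ | ⟨s, hs, hEq⟩
    · rw [hEq] at hsubR
      have hule : l.getD ℓ' 0 ≤ d+1 := hle _ (mem_of_getD h2 0)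
      have hfac : isFacet (Dfaces d (l.getD ℓ' 0)) ((Ls.getD ℓ' []).getD s ∅) := by
        obtain ⟨hnd', hmem', _⟩ := hblocks ℓ' h2
        rw [← Diam_GammaC hule]
        exact (hmem' _).1 (mem_of_getD hs ∅)
      obtain ⟨S'', hS'', hVeq⟩ := (isFacet_Dfaces_iff hule).1 hfac
      have hxR : origV d (l.getD ℓ' 0) ∈
          ((l.take ℓ).map (origV d)).toFinset ∪ posVerts d F D :=
        Finset.mem_union_left _ (mem_take_map_iff.2 ⟨ℓ', h1, h2, rfl⟩)
      have hmem2 := hsubR hxR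
      rw [hVeq, mem_Gfc_origV hule] at hmem2
      rcases hmem2 with h | h
      · omega
      · exact absurd h.1 (lt_irrefl _)
    · rw [hEq] at hsubR
      obtain ⟨S'', hS'', hVeq, hVdiff⟩ := hblockelt s (by omega)
      rw [hVeq] at hsubR
      have hDsub'' : D ⊆ S'' ∆ S0 := by
        intro m hm
        have hmP := hDsub hm
        simp only [Finset.mem_Ioc] at hmP
        have hmD := hm
        rw [hDdef, Finset.mem_symmDiff] at hm
        by_cases hmS : m ∈ S
        · have hn : newV d m ∈ ((l.take ℓ).map (origV d)).toFinset ∪ posVerts d F D :=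
            Finset.mem_union_right _ (mem_posVerts_newV hmD
              (by rw [hFeq, mem_Gfc_newV (by omega)]; right; exact ⟨hmP.1, hmS⟩))
          have hmem2 := hsubR hn
          rw [mem_Gfc_newV (by omega)] at hmem2
          rw [Finset.mem_symmDiff]
          left
          refine ⟨?_, ?_⟩
          · rcases hmem2 with h | h
            · omega
            · exact h.2
          · rcases hm with ⟨_, h0⟩ | ⟨h0, hcon⟩
            · exact h0
            · exact absurd hmS hcon
        · have ho : origV d m ∈ ((l.take ℓ).map (origV d)).toFinset ∪ posVerts d F D :=
            Finset.mem_union_right _ (mem_posVerts_origV hmD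
              (by rw [hFeq, mem_Gfc_origV (by omega)]; right; exact ⟨hmP.1, hmP.2, hmS⟩))
          have hmem2 := hsubR ho
          rw [mem_Gfc_origV (by omega)] at hmem2
          rw [Finset.mem_symmDiff]
          right
          refine ⟨?_, ?_⟩
          · rcases hm with ⟨hcon, _⟩ | ⟨h0, _⟩
            · exact absurd hcon hmS
            · exact h0
          · rcases hmem2 with h | h
            · omega
            · exact h.2.2
      have hdl := hpair' s t hs ht
      rw [hVdiff, hDeq] at hdl
      unfold dlexLT at hdl
      rcases hdl with h | ⟨hcard, m, hm1, hm2, _⟩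
      · have := Finset.card_le_card hDsub''
        omega
      · exact hm1 (hDsub'' hm2)
  · -- minimality
    intro G hGF hGnot
    intro x hxR
    by_contra hxG
    rcases Finset.mem_union.1 hxR with hx | hx
    · obtain ⟨u, hu1, hu2, rfl⟩ := mem_take_map_iff.1 hx
      have hult : l.getD u 0 < iℓ := sorted_getD_lt hl hu1 hℓ
      have hule : l.getD u 0 ≤ d+1 := hle _ (mem_of_getD hu2 0)
      have hsubG : G ⊆ Gfc d (l.getD u 0) ((insert iℓ S) ∩ Finset.Ioc (l.getD u 0) d) := by
        intro z hz
        refine Gfc_drop_orig hult hiℓd hS ?_ ?_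
        · rw [← hFeq]; exact hGF hz
        · intro h; exact hxG (h ▸ hz)
      obtain ⟨hnd', hmem', _⟩ := hblocks u hu2
      have hmemu : Gfc d (l.getD u 0) ((insert iℓ S) ∩ Finset.Ioc (l.getD u 0) d) ∈
          Ls.getD u [] := by
        refine (hmem' _).2 ?_
        rw [Diam_GammaC hule]
        exact (isFacet_Dfaces_iff hule).2 ⟨_, Finset.inter_subset_right, rfl⟩
      obtain ⟨j, hjlt, hjval⟩ := hindex u hu1 _ hmemu
      exact hGnot j (by omega) (by rw [hjval]; exact hsubG)
    · have hx' : x ∈ posVerts d (Gfc d iℓ S) D := by rw [← hFeq]; exact hx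
      obtain ⟨m, hmD, hcase⟩ := posVerts_cases hS hDsub hx'
      have hmP := hDsub hmD
      simp only [Finset.mem_Ioc] at hmP
      rcases hcase with ⟨hmS, rfl⟩ | ⟨hmS, rfl⟩
      · -- flip to insert
        have hsubG : G ⊆ Gfc d iℓ (insert m S) := by
          intro z hz
          refine Gfc_flip_insert hmP.1 hmP.2 hmS ?_ ?_
          · rw [← hFeq]; exact hGF hz
          · intro h; exact hxG (h ▸ hz)
        have hS' : insert m S ⊆ Finset.Ioc iℓ d := by
          intro z hz
          rcases Finset.mem_insert.1 hz with rfl | hz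
          · simp only [Finset.mem_Ioc]; omega
          · exact hS hz
        have hmemb : Gfc d iℓ (insert m S) ∈ Lb := by
          refine (hmemiff _).2 ?_
          rw [Diam_GammaC hiℓd]
          exact (isFacet_Dfaces_iff hiℓd).2 ⟨_, hS', rfl⟩
        obtain ⟨s, hsl, hseq⟩ := (mem_iff_getD ∅).1 hmemb
        have hdiff' : diffSet d (Finset.Ioc iℓ d) (F0s.getD ℓ ∅) (Lb.getD s ∅) =
            D.erase m := by
          rw [hseq, hF0eq, diffSet_Gfc hS' hS0, hDdef]
          exact symmDiff_insert_eq hmS (by rw [← hDdef]; exact hmD)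
        have hne : s ≠ t := by
          intro h
          rw [h, ← hFdef, hFeq] at hseq
          have h2 := (Gfc_subset_iff hiℓd hiℓd hS hS').1 (le_of_eq hseq)
          have : m ∈ S := by rw [h2.2]; exact Finset.mem_insert_self m S
          exact hmS this
        have hst : s < t := by
          by_contra hge
          have hts : t < s := by omega
          have hdl := hpair' t s hts hsl
          rw [hdiff', hDeq] at hdl
          have hcard := Finset.card_erase_of_mem hmD
          have hpos : 0 < D.card := Finset.card_pos.2 ⟨m, hmD⟩
          unfold dlexLT at hdl
          rcases hdl with h | ⟨h, _⟩ <;> omega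
        refine hGnot ((Ls.take ℓ).flatten.length + s) (by omega) ?_
        rw [flatten_getD_eq Ls ∅ ℓ s hLsℓ hsl]
        rw [hLbdef] at hseq
        rw [hseq]
        exact hsubG
      · -- flip to erase
        have hsubG : G ⊆ Gfc d iℓ (S.erase m) := by
          intro z hz
          refine Gfc_flip_erase hmP.1 hmP.2 hmS ?_ ?_
          · rw [← hFeq]; exact hGF hz
          · intro h; exact hxG (h ▸ hz)
        have hS' : S.erase m ⊆ Finset.Ioc iℓ d := fun z hz => hS (Finset.mem_of_mem_erase hz)
        have hmemb : Gfc d iℓ (S.erase m) ∈ Lb := by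
          refine (hmemiff _).2 ?_
          rw [Diam_GammaC hiℓd]
          exact (isFacet_Dfaces_iff hiℓd).2 ⟨_, hS', rfl⟩
        obtain ⟨s, hsl, hseq⟩ := (mem_iff_getD ∅).1 hmemb
        have hdiff' : diffSet d (Finset.Ioc iℓ d) (F0s.getD ℓ ∅) (Lb.getD s ∅) =
            D.erase m := by
          rw [hseq, hF0eq, diffSet_Gfc hS' hS0, hDdef]
          exact symmDiff_erase_eq hmS (by rw [← hDdef]; exact hmD)
        have hne : s ≠ t := by
          intro h
          rw [h, ← hFdef, hFeq] at hseq
          have h2 := (Gfc_subset_iff hiℓd hiℓd hS hS').1 (le_of_eq hseq)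
          have : m ∉ S := by rw [h2.2]; exact Finset.notMem_erase m S
          exact this hmS
        have hst : s < t := by
          by_contra hge
          have hts : t < s := by omega
          have hdl := hpair' t s hts hsl
          rw [hdiff', hDeq] at hdl
          have hcard := Finset.card_erase_of_mem hmD
          have hpos : 0 < D.card := Finset.card_pos.2 ⟨m, hmD⟩
          unfold dlexLT at hdl
          rcases hdl with h | ⟨h, _⟩ <;> omega
        refine hGnot ((Ls.take ℓ).flatten.length + s) (by omega) ?_
        rw [flatten_getD_eq Ls ∅ ℓ s hLsℓ hsl]
        rw [hLbdef] at hseq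
        rw [hseq]
        exact hsubG

theorem stmt19' (d : ℕ) (l : List ℕ) (hl : l.Pairwise (· < ·)) (hne : l ≠ [])
    (hle : ∀ i ∈ l, i ≤ d+1)
    (F0s : List (Finset (V d))) (hF0len : F0s.length = l.length)
    (hF0 : ∀ ℓ < l.length, isFacet (Diam d (GammaC d (l.getD ℓ 0))) (F0s.getD ℓ ∅))
    (Ls : List (List (Finset (V d)))) (hLslen : Ls.length = l.length)
    (hblocks : ∀ ℓ < l.length,
      IsDegLexOrder d (Finset.Ioc (l.getD ℓ 0) d) (Diam d (GammaC d (l.getD ℓ 0)))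
        (F0s.getD ℓ ∅) (Ls.getD ℓ [])) :
    IsShelling (DiamU d l.toFinset) Ls.flatten ∧
    ∀ ℓ < l.length, ∀ i < (Ls.getD ℓ []).length,
      IsRestriction Ls.flatten ((Ls.take ℓ).flatten.length + i)
        ((((l.take ℓ).map (origV d)).toFinset) ∪
          posVerts d ((Ls.getD ℓ []).getD i ∅)
            (diffSet d (Finset.Ioc (l.getD ℓ 0) d) (F0s.getD ℓ ∅)
              ((Ls.getD ℓ []).getD i ∅))) := by
  have hfacet_block : ∀ u, u < l.length → ∀ F ∈ Ls.getD u [],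
      ∃ S, S ⊆ Finset.Ioc (l.getD u 0) d ∧ F = Gfc d (l.getD u 0) S := by
    intro u hu F hF
    obtain ⟨_, hmem', _⟩ := hblocks u hu
    have := (hmem' F).1 hF
    rw [Diam_GammaC (hle _ (mem_of_getD hu 0))] at this
    exact (isFacet_Dfaces_iff (hle _ (mem_of_getD hu 0))).1 this
  refine ⟨⟨?_, ?_, ?_⟩, ?_⟩
  · -- Nodup
    rw [List.nodup_flatten]
    constructor
    · intro Lb hLb
      obtain ⟨u, hu, hueq⟩ := (mem_iff_getD []).1 hLb
      obtain ⟨hnd', _, _⟩ := hblocks u (by omega)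
      rw [← hueq]; exact hnd'
    · rw [List.pairwise_iff_getElem]
      intro u v hu hv huv F hFu hFv
      rw [← List.getD_eq_getElem Ls [] hu] at hFu
      rw [← List.getD_eq_getElem Ls [] hv] at hFv
      obtain ⟨S1, hS1, hEq1⟩ := hfacet_block u (by omega) F hFu
      obtain ⟨S2, hS2, hEq2⟩ := hfacet_block v (by omega) F hFv
      have hlt : l.getD u 0 < l.getD v 0 := sorted_getD_lt hl huv (by omega)
      have h1e : l.getD u 0 ≤ d+1 := hle _ (mem_of_getD (by omega : u < l.length) 0)
      have h2e : l.getD v 0 ≤ d+1 := hle _ (mem_of_getD (by omega : v < l.length) 0)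
      have := (Gfc_subset_iff h1e h2e hS1 hS2).1 (by rw [← hEq1, ← hEq2])
      omega
  · -- membership iff facet
    intro F
    rw [isFacet_DiamU_iff l hle, List.mem_flatten]
    constructor
    · rintro ⟨Lb, hLb, hF⟩
      obtain ⟨u, hu, hueq⟩ := (mem_iff_getD []).1 hLb
      rw [← hueq] at hF
      obtain ⟨S, hS, hEq⟩ := hfacet_block u (by omega) F hF
      exact ⟨l.getD u 0, mem_of_getD (by omega) 0, S, hS, hEq⟩
    · rintro ⟨i, hi, S, hS, rfl⟩
      obtain ⟨u, hu, hueq⟩ := (mem_iff_getD 0).1 hi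
      refine ⟨Ls.getD u [], mem_of_getD (by omega) [], ?_⟩
      obtain ⟨_, hmem', _⟩ := hblocks u hu
      refine (hmem' _).2 ?_
      rw [Diam_GammaC (hle _ (mem_of_getD hu 0)), hueq]
      exact (isFacet_Dfaces_iff (hle _ hi)).2 ⟨S, hS, rfl⟩
  · -- restrictions exist
    intro idx hidx
    obtain ⟨u, hu, s, hs, rfl⟩ := flatten_index_decomp Ls idx hidx
    exact ⟨_, restriction_main d l hl hle F0s hF0 Ls hLslen hblocks u (by omega) s hs⟩
  · intro ℓ hℓ t ht
    exact restriction_main d l hl hle F0s hF0 Ls hLslen hblocks ℓ hℓ t ht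
/-- concatenating the degree lexicographic orders of the blocks
`⋄(Γ_{i_ℓ})` gives a shelling of `⋄(Γ_{i_1},…,Γ_{i_k})`, with explicitly
described restriction faces. -/
theorem stmt19 (d : ℕ) (l : List ℕ) (hl : l.Pairwise (· < ·)) (hne : l ≠ [])
    (hle : ∀ i ∈ l, i ≤ d+1)
    (F0s : List (Finset (V d))) (hF0len : F0s.length = l.length)
    (hF0 : ∀ ℓ < l.length, isFacet (Diam d (GammaC d (l.getD ℓ 0))) (F0s.getD ℓ ∅))
    (Ls : List (List (Finset (V d)))) (hLslen : Ls.length = l.length)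
    (hblocks : ∀ ℓ < l.length,
      IsDegLexOrder d (Finset.Ioc (l.getD ℓ 0) d) (Diam d (GammaC d (l.getD ℓ 0)))
        (F0s.getD ℓ ∅) (Ls.getD ℓ [])) :
    IsShelling (DiamU d l.toFinset) Ls.flatten ∧
    ∀ ℓ < l.length, ∀ i < (Ls.getD ℓ []).length,
      IsRestriction Ls.flatten ((Ls.take ℓ).flatten.length + i)
        ((((l.take ℓ).map (origV d)).toFinset) ∪
          posVerts d ((Ls.getD ℓ []).getD i ∅)
            (diffSet d (Finset.Ioc (l.getD ℓ 0) d) (F0s.getD ℓ ∅)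
              ((Ls.getD ℓ []).getD i ∅))) := by
  exact stmt19' d l hl hne hle F0s hF0len hF0 Ls hLslen hblocks

end Paper
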